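/- For p ∈ (0,1), α ∈ (0,1), and c ∈ (0,1) with c < α, the quantity (n+1) · C(n, ⌊cn⌋) α^{⌊cn⌋} (1-α)^{n-⌊cn⌋} tends to 0 as n → ∞; more precisely (1/n) log b(n, α, ⌊cn⌋) → −D(c‖α) < 0, where D(c‖α) = c log(c/α) + (1−c) log((1−c)/(1−α)). -/

import Mathlib

open Filter Real Topology


lemma fact_lb (n : ℕ) : (n:ℝ)^n ≤ n.factorial * Real.exp n := by
  have h1 : (n:ℝ)^n / n.factorial ≤ ∑ i ∈ Finset.range (n+1), (n:ℝ)^i / i.factorial :=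
    Finset.single_le_sum (f := fun i => (n:ℝ)^i / (i.factorial:ℝ))
      (fun i _ => by positivity) (Finset.self_mem_range_succ n)
  have h2 := h1.trans (Real.sum_le_exp_of_nonneg (Nat.cast_nonneg n) (n+1))
  have hf : (0:ℝ) < n.factorial := by exact_mod_cast Nat.factorial_pos n
  rw [div_le_iff₀ hf] at h2
  linarith [h2]

lemma fact_ub (n : ℕ) (hn : 1 ≤ n) : (n.factorial : ℝ) ≤ (n:ℝ)^(n+1) * Real.exp (1 - n) := by
  induction n with
  | zero => omega
  | succ m ih =>
    rcases Nat.lt_or_ge m 1 with hm | hm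
    · interval_cases m
      norm_num
    · have hm0 : (0:ℝ) < m := by exact_mod_cast hm
      have ihm := ih hm
      have hr : (0:ℝ) < ((m:ℝ)+1)/m := by positivity
      have hlog : 1 - (((m:ℝ)+1)/m)⁻¹ ≤ Real.log (((m:ℝ)+1)/m) :=
        Real.one_sub_inv_le_log_of_pos hr
      have hinv : (((m:ℝ)+1)/m)⁻¹ = (m:ℝ)/((m:ℝ)+1) := by rw [inv_div]
      have h1 : 1/((m:ℝ)+1) ≤ Real.log (((m:ℝ)+1)/m) := by
        rw [hinv] at hlog
        have : 1 - (m:ℝ)/((m:ℝ)+1) = 1/((m:ℝ)+1) := by field_simp; ring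
        linarith [this ▸ hlog]
      have h2 : (1:ℝ) ≤ ((m:ℝ)+1) * Real.log (((m:ℝ)+1)/m) := by
        have hp : (0:ℝ) < (m:ℝ)+1 := by positivity
        calc (1:ℝ) = ((m:ℝ)+1) * (1/((m:ℝ)+1)) := by field_simp
        _ ≤ ((m:ℝ)+1) * Real.log (((m:ℝ)+1)/m) := by
            exact mul_le_mul_of_nonneg_left h1 hp.le
      have key : Real.exp 1 * (m:ℝ)^(m+1) ≤ ((m:ℝ)+1)^(m+1) := by
        have e1 : Real.exp 1 ≤ (((m:ℝ)+1)/m)^(m+1) := by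
          calc Real.exp 1 ≤ Real.exp (((m:ℝ)+1) * Real.log (((m:ℝ)+1)/m)) :=
                Real.exp_le_exp.mpr h2
          _ = (((m:ℝ)+1)/m)^(m+1) := by
              rw [show (((m:ℝ)+1) * Real.log (((m:ℝ)+1)/m)) = ((m+1:ℕ):ℝ) * Real.log (((m:ℝ)+1)/m) by push_cast; ring,
                Real.exp_nat_mul, Real.exp_log hr]
        calc Real.exp 1 * (m:ℝ)^(m+1) ≤ (((m:ℝ)+1)/m)^(m+1) * (m:ℝ)^(m+1) :=
              mul_le_mul_of_nonneg_right e1 (by positivity)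
        _ = ((m:ℝ)+1)^(m+1) := by
            rw [← mul_pow]; congr 1; field_simp
      have hexp : Real.exp (1 - (m:ℝ)) = Real.exp 1 * Real.exp (-(m:ℝ)) := by
        rw [← Real.exp_add]; ring_nf
      rw [Nat.factorial_succ]
      push_cast
      calc ((m:ℝ)+1) * (m.factorial:ℝ) ≤ ((m:ℝ)+1) * ((m:ℝ)^(m+1) * Real.exp (1 - m)) := by
            exact mul_le_mul_of_nonneg_left ihm (by positivity)
      _ = ((m:ℝ)+1) * ((Real.exp 1 * (m:ℝ)^(m+1)) * Real.exp (-(m:ℝ))) := by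
            rw [hexp]; ring
      _ ≤ ((m:ℝ)+1) * (((m:ℝ)+1)^(m+1) * Real.exp (-(m:ℝ))) := by
            refine mul_le_mul_of_nonneg_left (mul_le_mul_of_nonneg_right key ?_) ?_ <;> positivity
      _ = ((m:ℝ)+1)^(m+1+1) * Real.exp (1 - ((m:ℝ)+1)) := by
            rw [pow_succ]; ring_nf


lemma log_fact_lb (n : ℕ) (hn : 1 ≤ n) :
    (n:ℝ) * Real.log n - n ≤ Real.log (n.factorial) := by
  have hn0 : (0:ℝ) < n := by exact_mod_cast hn
  have hf : (0:ℝ) < n.factorial := by exact_mod_cast Nat.factorial_pos n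
  have h := Real.log_le_log (by positivity) (fact_lb n)
  rw [Real.log_pow, Real.log_mul hf.ne' (Real.exp_ne_zero _), Real.log_exp] at h
  linarith

lemma log_fact_ub (n : ℕ) (hn : 1 ≤ n) :
    Real.log (n.factorial) ≤ ((n:ℝ)+1) * Real.log n + 1 - n := by
  have hn0 : (0:ℝ) < n := by exact_mod_cast hn
  have hf : (0:ℝ) < n.factorial := by exact_mod_cast Nat.factorial_pos n
  have h := Real.log_le_log hf (fact_ub n hn)
  rw [Real.log_mul (by positivity) (Real.exp_ne_zero _), Real.log_pow, Real.log_exp] at h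
  push_cast at h
  linarith

lemma log_choose_bounds (n k : ℕ) (hk : 1 ≤ k) (hkn : k < n) :
    (n:ℝ) * Real.log n - (k:ℝ) * Real.log k - ((n-k:ℕ):ℝ) * Real.log (n-k:ℕ)
      - (Real.log k + Real.log (n-k:ℕ) + 2)
    ≤ Real.log (n.choose k) ∧
    Real.log (n.choose k) ≤ (n:ℝ) * Real.log n - (k:ℝ) * Real.log k
      - ((n-k:ℕ):ℝ) * Real.log (n-k:ℕ) + (Real.log n + 1) := by
  set m := n - k with hm
  have hm1 : 1 ≤ m := by omega
  have hn1 : 1 ≤ n := by omega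
  have hmr : (m:ℝ) = (n:ℝ) - k := by
    rw [hm]; push_cast [Nat.cast_sub hkn.le]; ring
  have hkf : (0:ℝ) < k.factorial := by exact_mod_cast Nat.factorial_pos k
  have hmf : (0:ℝ) < m.factorial := by exact_mod_cast Nat.factorial_pos m
  have hch : Real.log (n.choose k) =
      Real.log n.factorial - (Real.log k.factorial + Real.log m.factorial) := by
    rw [Nat.cast_choose ℝ hkn.le, Real.log_div (by positivity) (by positivity),
      Real.log_mul hkf.ne' hmf.ne']
  have l1 := log_fact_lb n hn1
  have l2 := log_fact_ub n hn1
  have l3 := log_fact_lb k hk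
  have l4 := log_fact_ub k hk
  have l5 := log_fact_lb m hm1
  have l6 := log_fact_ub m hm1
  constructor <;> rw [hch] <;> push_cast at * <;> linarith [hmr]

/-- The binomial probability mass function `b(n,p,x) = C(n,x) p^x (1-p)^(n-x)`. -/
noncomputable def binomPMF (n : ℕ) (p : ℝ) (x : ℕ) : ℝ :=
  (n.choose x : ℝ) * p ^ x * (1 - p) ^ (n - x)

/-- Large deviation asymptotics: for `c < α`, `(n+1) b(n,α,⌊cn⌋) → 0`; more precisely
`(1/n) log b(n,α,⌊cn⌋) → −D(c‖α) < 0` with `D` the Bernoulli Kullback–Leibler divergence. -/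
theorem stmt9 (p α c : ℝ) (hp : p ∈ Set.Ioo (0:ℝ) 1) (hα : α ∈ Set.Ioo (0:ℝ) 1)
    (hc : c ∈ Set.Ioo (0:ℝ) 1) (hcα : c < α) :
    Tendsto (fun n : ℕ => ((n : ℝ) + 1) * binomPMF n α ⌊c * n⌋₊) atTop (nhds 0) ∧
    Tendsto (fun n : ℕ => (1 / (n : ℝ)) * Real.log (binomPMF n α ⌊c * n⌋₊)) atTop
      (nhds (-(c * Real.log (c / α) + (1 - c) * Real.log ((1 - c) / (1 - α))))) ∧
    0 < c * Real.log (c / α) + (1 - c) * Real.log ((1 - c) / (1 - α)) := by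
  obtain ⟨hα0, hα1⟩ := hα
  obtain ⟨hc0, hc1⟩ := hc
  have h1α : (0:ℝ) < 1 - α := by linarith
  have h1c : (0:ℝ) < 1 - c := by linarith
  set D := c * Real.log (c / α) + (1 - c) * Real.log ((1 - c) / (1 - α)) with hD
  -- Part 3 : positivity of D
  have hDpos : 0 < D := by
    have hr1 : (1:ℝ) < α / c := (one_lt_div hc0).mpr hcα
    have hr2 : (1-α) / (1-c) < 1 := (div_lt_one h1c).mpr (by linarith)
    have l1 : Real.log (α/c) < α/c - 1 :=
      Real.log_lt_sub_one_of_pos (by positivity) hr1.ne'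
    have l2 : Real.log ((1-α)/(1-c)) < (1-α)/(1-c) - 1 :=
      Real.log_lt_sub_one_of_pos (by positivity) hr2.ne
    have e1 : Real.log (c/α) = - Real.log (α/c) := by
      rw [Real.log_div hc0.ne' hα0.ne', Real.log_div hα0.ne' hc0.ne']; ring
    have e2 : Real.log ((1-c)/(1-α)) = - Real.log ((1-α)/(1-c)) := by
      rw [Real.log_div h1c.ne' h1α.ne', Real.log_div h1α.ne' h1c.ne']; ring
    have key : c * (α/c - 1) + (1-c) * ((1-α)/(1-c) - 1) = 0 := by field_simp; ring
    rw [hD, e1, e2]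
    nlinarith [mul_lt_mul_of_pos_left l1 hc0, mul_lt_mul_of_pos_left l2 h1c]
  -- x_n → c
  have hxlim : Tendsto (fun n : ℕ => (⌊c * n⌋₊ : ℝ) / n) atTop (𝓝 c) :=
    (tendsto_nat_floor_mul_div_atTop hc0.le).comp tendsto_natCast_atTop_atTop
  -- G' and its limit
  set G : ℕ → ℝ := fun n =>
    -(((⌊c * n⌋₊ : ℝ)/n) * Real.log (((⌊c * n⌋₊ : ℝ)/n) / α)
      + (1 - (⌊c * n⌋₊ : ℝ)/n) * Real.log ((1 - (⌊c * n⌋₊ : ℝ)/n) / (1 - α))) with hG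
  have hGlim : Tendsto G atTop (𝓝 (-D)) := by
    have t1 : Tendsto (fun n : ℕ => ((⌊c * n⌋₊ : ℝ)/n) * Real.log (((⌊c * n⌋₊ : ℝ)/n) / α))
        atTop (𝓝 (c * Real.log (c/α))) :=
      hxlim.mul ((hxlim.div_const α).log (by positivity))
    have t2 : Tendsto (fun n : ℕ =>
        (1 - (⌊c * n⌋₊ : ℝ)/n) * Real.log ((1 - (⌊c * n⌋₊ : ℝ)/n) / (1 - α)))
        atTop (𝓝 ((1-c) * Real.log ((1-c)/(1-α)))) :=
      (tendsto_const_nhds.sub hxlim).mul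
        (((tendsto_const_nhds.sub hxlim).div_const (1-α)).log (by positivity))
    exact (t1.add t2).neg
  -- log n / n → 0 and the bound sequence
  have hlogn : Tendsto (fun n : ℕ => Real.log n / n) atTop (𝓝 0) := by
    have := Real.isLittleO_log_id_atTop.tendsto_div_nhds_zero
    exact (this.comp tendsto_natCast_atTop_atTop).congr (fun n => by simp)
  have hbnd : Tendsto (fun n : ℕ => (2 * Real.log n + 2) / n) atTop (𝓝 0) := by
    have h := (hlogn.const_mul 2).add (tendsto_one_div_atTop_nhds_zero_nat.const_mul 2)
    simp only [mul_zero, add_zero] at h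
    exact h.congr (fun n => by ring)
  -- eventual pointwise estimate
  obtain ⟨N0, hN0⟩ := exists_nat_ge (1/c)
  have hev : ∀ n : ℕ, max N0 1 ≤ n →
      |(1 / (n:ℝ)) * Real.log (binomPMF n α ⌊c * n⌋₊) - G n| ≤ (2 * Real.log n + 2) / n := by
    intro n hn
    have hn1 : 1 ≤ n := le_trans (le_max_right _ _) hn
    have hn0 : (0:ℝ) < n := by exact_mod_cast hn1
    set k := ⌊c * n⌋₊ with hkdef
    have hcn1 : (1:ℝ) ≤ c * n := by
      have hnN : (N0:ℝ) ≤ n := by exact_mod_cast le_trans (le_max_left _ _) hn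
      have : 1/c ≤ (n:ℝ) := le_trans hN0 hnN
      rw [div_le_iff₀ hc0] at this; linarith
    have hk1 : 1 ≤ k := Nat.le_floor (by exact_mod_cast hcn1)
    have hk0 : (0:ℝ) < k := by exact_mod_cast hk1
    have hkcn : (k:ℝ) ≤ c * n := Nat.floor_le (by positivity)
    have hkn : k < n := by
      have : (k:ℝ) < n := lt_of_le_of_lt hkcn (by nlinarith)
      exact_mod_cast this
    set m := n - k with hmdef
    have hm1 : 1 ≤ m := by omega
    have hm0 : (0:ℝ) < m := by exact_mod_cast hm1
    have hmr : (m:ℝ) = (n:ℝ) - k := by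
      rw [hmdef]; push_cast [Nat.cast_sub hkn.le]; ring
    have hch0 : (0:ℝ) < n.choose k := by exact_mod_cast Nat.choose_pos hkn.le
    -- log of binomPMF
    have hlogbp : Real.log (binomPMF n α k) =
        Real.log (n.choose k) + (k:ℝ) * Real.log α + (m:ℝ) * Real.log (1-α) := by
      rw [binomPMF, Real.log_mul (by positivity) (by positivity),
        Real.log_mul (by positivity) (by positivity), Real.log_pow, Real.log_pow]
    -- G in expanded form
    have hGn : (n:ℝ) * G n = -((k:ℝ) * Real.log k + (m:ℝ) * Real.log m
        - (n:ℝ) * Real.log n - (k:ℝ) * Real.log α - (m:ℝ) * Real.log (1-α)) := by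
      have e1 : 1 - (k:ℝ)/n = (m:ℝ)/n := by rw [hmr]; field_simp
      have e2 : Real.log (((k:ℝ)/n) / α) = Real.log k - Real.log n - Real.log α := by
        rw [Real.log_div (by positivity) hα0.ne', Real.log_div hk0.ne' hn0.ne']
      have e3 : Real.log (((m:ℝ)/n) / (1-α)) = Real.log m - Real.log n - Real.log (1-α) := by
        rw [Real.log_div (by positivity) h1α.ne', Real.log_div hm0.ne' hn0.ne']
      rw [hG]
      simp only
      rw [← hkdef, e1, e2, e3, hmr]
      field_simp
      ring
    -- bounds
    obtain ⟨hlb, hub⟩ := log_choose_bounds n k hk1 hkn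
    rw [← hmdef] at hlb hub
    have hlogk : Real.log k ≤ Real.log n := Real.log_le_log hk0 (by exact_mod_cast hkn.le)
    have hlogm : Real.log m ≤ Real.log n :=
      Real.log_le_log hm0 (by rw [hmr]; linarith)
    have hlogn0 : 0 ≤ Real.log n := Real.log_nonneg (by exact_mod_cast hn1)
    have hlogk0 : 0 ≤ Real.log k := Real.log_nonneg (by exact_mod_cast hk1)
    have hlogm0 : 0 ≤ Real.log m := Real.log_nonneg (by exact_mod_cast hm1)
    -- combine
    have hdiff : (1 / (n:ℝ)) * Real.log (binomPMF n α k) - G n =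
        (Real.log (n.choose k) - ((n:ℝ) * Real.log n - (k:ℝ) * Real.log k
          - (m:ℝ) * Real.log m)) / n := by
      have : G n = ((n:ℝ) * G n) / n := by field_simp
      rw [this, hlogbp, hGn]; field_simp; ring
    rw [hdiff, abs_div, abs_of_pos hn0, div_le_div_iff₀ hn0 hn0]
    have habs : |Real.log (n.choose k) - ((n:ℝ) * Real.log n - (k:ℝ) * Real.log k
        - (m:ℝ) * Real.log m)| ≤ 2 * Real.log n + 2 := by
      rw [abs_le]
      constructor
      · linarith [hlb, hlogk, hlogm]
      · linarith [hub, hlogn0]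
    exact mul_le_mul_of_nonneg_right habs hn0.le
  -- Part 2 : the tendsto of φ
  have hφ : Tendsto (fun n : ℕ => (1 / (n:ℝ)) * Real.log (binomPMF n α ⌊c * n⌋₊))
      atTop (𝓝 (-D)) := by
    have hlo : Tendsto (fun n : ℕ => G n - (2 * Real.log n + 2)/n) atTop (𝓝 (-D)) := by
      simpa using hGlim.sub hbnd
    have hhi : Tendsto (fun n : ℕ => G n + (2 * Real.log n + 2)/n) atTop (𝓝 (-D)) := by
      simpa using hGlim.add hbnd
    refine tendsto_of_tendsto_of_tendsto_of_le_of_le' hlo hhi ?_ ?_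
    · filter_upwards [eventually_ge_atTop (max N0 1)] with n hn
      have := abs_le.mp (hev n hn)
      linarith [this.1]
    · filter_upwards [eventually_ge_atTop (max N0 1)] with n hn
      have := abs_le.mp (hev n hn)
      linarith [this.2]
  refine ⟨?_, hφ, hDpos⟩
  -- Part 1
  have hb : (0:ℝ) < D/2 := half_pos hDpos
  have hdecay : Tendsto (fun n : ℕ => ((n:ℝ)+1) * Real.exp (-(D/2 * n))) atTop (𝓝 0) := by
    have base : Tendsto (fun x : ℝ => x * Real.exp (-x)) atTop (𝓝 0) := by
      simpa using tendsto_pow_mul_exp_neg_atTop_nhds_zero 1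
    have harg : Tendsto (fun n : ℕ => D/2 * (n:ℝ)) atTop atTop :=
      Tendsto.const_mul_atTop hb tendsto_natCast_atTop_atTop
    have c1 : Tendsto (fun n : ℕ => (D/2 * n) * Real.exp (-(D/2 * n))) atTop (𝓝 0) :=
      base.comp harg
    have c2 : Tendsto (fun n : ℕ => Real.exp (-(D/2 * n))) atTop (𝓝 0) :=
      Real.tendsto_exp_neg_atTop_nhds_zero.comp harg
    have := (c1.const_mul (2/D)).add c2
    simp only [mul_zero, add_zero] at this
    refine this.congr (fun n => ?_)
    field_simp
  have hupper : ∀ᶠ n : ℕ in atTop,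
      ((n:ℝ)+1) * binomPMF n α ⌊c * n⌋₊ ≤ ((n:ℝ)+1) * Real.exp (-(D/2 * n)) := by
    have hevlt : ∀ᶠ n : ℕ in atTop,
        (1 / (n:ℝ)) * Real.log (binomPMF n α ⌊c * n⌋₊) < -(D/2) :=
      hφ.eventually_lt_const (by linarith)
    filter_upwards [hevlt, eventually_ge_atTop (max N0 1)] with n hlt hn
    have hn1 : 1 ≤ n := le_trans (le_max_right _ _) hn
    have hn0 : (0:ℝ) < n := by exact_mod_cast hn1
    have hkn : ⌊c * n⌋₊ ≤ n := by
      have : (⌊c * n⌋₊:ℝ) ≤ c * n := Nat.floor_le (by positivity)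
      have : (⌊c * n⌋₊:ℝ) ≤ n := by nlinarith
      exact_mod_cast this
    have hpos : 0 < binomPMF n α ⌊c * n⌋₊ := by
      have : (0:ℝ) < n.choose ⌊c * n⌋₊ := by exact_mod_cast Nat.choose_pos hkn
      rw [binomPMF]; positivity
    have hlog : Real.log (binomPMF n α ⌊c * n⌋₊) < -(D/2) * n := by
      have := (mul_lt_mul_of_pos_left hlt hn0)
      rw [show (n:ℝ) * ((1/(n:ℝ)) * Real.log (binomPMF n α ⌊c * n⌋₊))
          = Real.log (binomPMF n α ⌊c * n⌋₊) by field_simp] at this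
      linarith
    have : binomPMF n α ⌊c * n⌋₊ ≤ Real.exp (-(D/2 * n)) := by
      rw [← Real.exp_log hpos]
      exact Real.exp_le_exp.mpr (by linarith)
    exact mul_le_mul_of_nonneg_left this (by positivity)
  have hlower : ∀ᶠ n : ℕ in atTop, 0 ≤ ((n:ℝ)+1) * binomPMF n α ⌊c * n⌋₊ := by
    filter_upwards with n
    have : 0 ≤ binomPMF n α ⌊c * n⌋₊ := by
      rw [binomPMF]; positivity
    positivity
  exact tendsto_of_tendsto_of_tendsto_of_le_of_le' tendsto_const_nhds hdecay hlower hupper
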